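/- Fix integers k ≥ 1, 0 ≤ l ≤ k and m = (m₁, …, m_k) ∈ ℤ_{≥0}^k such that |m| − l is a nonnegative even integer, and set s = (|m| − l)/2. Assume s ≥ k + 1. Let f ∈ ℂ[x₁, …, x_s] belong to the space 𝓕. Then for every integer a with k + 1 ≤ a ≤ s, the specialization f(x, …, x, x_{a+1}, …, x_s), obtained by setting the first a variables equal to a single variable x, is identically zero. -/

import Mathlib

noncomputable section

/-- `|m| = ∑ i·mᵢ` (indices `1, …, k`). -/
def wt (k : ℕ) (m : Fin k → ℕ) : ℕ := ∑ i, (i.1 + 1) * m i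

/-- `M_a = ∑ min(a,i)·mᵢ`. -/
def Ma (k : ℕ) (m : Fin k → ℕ) (a : ℕ) : ℕ := ∑ i, min a (i.1 + 1) * m i

/-- The specialization `f(x, …, x, x_{a+1}, …, x_s)` (the first `a` variables set
equal to a single new variable `x`), as a polynomial in `x` with coefficients
that are polynomials in the remaining variables. -/
def spec (s a : ℕ) (f : MvPolynomial (Fin s) ℂ) :
    Polynomial (MvPolynomial (Fin s) ℂ) :=
  MvPolynomial.aeval (fun i : Fin s =>
    if (i : ℕ) < a then (Polynomial.X : Polynomial (MvPolynomial (Fin s) ℂ))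
    else Polynomial.C (MvPolynomial.X i)) f

/-- The substitution setting the first `c` variables to `0`. -/
def zeroFirst (s c : ℕ) (f : MvPolynomial (Fin s) ℂ) : MvPolynomial (Fin s) ℂ :=
  MvPolynomial.aeval (fun i : Fin s =>
    if (i : ℕ) < c then 0 else MvPolynomial.X i) f

/-- The space `𝓕` of symmetric polynomials in `s` variables satisfying:
(1) `deg_x f(x,…,x,x_{a+1},…,x_s) ≤ M_a - a` for `1 ≤ a ≤ s`;
(2) `f(0, x₂, …, x_s) = 0`;
(3) if `s ≥ k - l + 1` then, writing `f = (∏ xᵢ)·g`, the polynomial `g`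
vanishes when its first `k - l + 1` variables are set to `0`. -/
def FSpace (k l s : ℕ) (m : Fin k → ℕ) : Set (MvPolynomial (Fin s) ℂ) :=
  {f | f.IsSymmetric ∧
    (∀ a : ℕ, 1 ≤ a → a ≤ s → ∀ d : ℕ,
      (Ma k m a : ℤ) - (a : ℤ) < (d : ℤ) → (spec s a f).coeff d = 0) ∧
    zeroFirst s 1 f = 0 ∧
    (k - l + 1 ≤ s → ∀ gg : MvPolynomial (Fin s) ℂ,
      f = (∏ i, MvPolynomial.X i) * gg → zeroFirst s (k - l + 1) gg = 0)}

/- ## Auxiliary lemmas -/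

lemma card_lt_aux (s a : ℕ) (h : a ≤ s) :
    (Finset.univ.filter (fun i : Fin s => i.1 < a)).card = a := by
  have heq : (Finset.univ.filter (fun i : Fin s => i.1 < a)) =
      Finset.map (Fin.castLEEmb h) Finset.univ := by
    ext x
    simp only [Finset.mem_filter, Finset.mem_univ, true_and, Finset.mem_map]
    constructor
    · intro hx
      exact ⟨⟨x.1, hx⟩, by simp [Fin.castLEEmb, Fin.castLE]⟩
    · rintro ⟨y, rfl⟩
      simpa [Fin.castLEEmb, Fin.castLE] using y.2
  rw [heq, Finset.card_map, Finset.card_univ, Fintype.card_fin]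

lemma exists_perm_aux (s c : ℕ) (T : Finset (Fin s)) (hT : T.card = c) :
    ∃ σ : Equiv.Perm (Fin s), ∀ i : Fin s, i.1 < c → σ i ∈ T := by
  classical
  have hcs : c ≤ s := by
    have := T.card_le_univ
    simpa [hT] using this
  have h1 : Fintype.card {x : Fin s // x.1 < c} = Fintype.card {x : Fin s // x ∈ T} := by
    rw [Fintype.card_subtype, card_lt_aux s c hcs, Fintype.card_coe, hT]
  have h2 : Fintype.card {x : Fin s // ¬ x.1 < c} = Fintype.card {x : Fin s // ¬ x ∈ T} := by
    rw [Fintype.card_subtype_compl, Fintype.card_subtype_compl, h1]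
  let e1 := Fintype.equivOfCardEq h1
  let e2 := Fintype.equivOfCardEq h2
  refine ⟨(Equiv.sumCompl (fun x : Fin s => x.1 < c)).symm.trans
    ((e1.sumCongr e2).trans (Equiv.sumCompl (fun x => x ∈ T))), ?_⟩
  intro i hi
  have h3 : (Equiv.sumCompl fun x : Fin s => x.1 < c).symm i = Sum.inl ⟨i, hi⟩ :=
    Equiv.sumCompl_symm_apply_of_pos (p := fun x : Fin s => x.1 < c) hi
  simp only [Equiv.trans_apply, h3, Equiv.sumCongr_apply, Sum.map_inl,
    Equiv.sumCompl_apply_inl]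
  exact (e1 ⟨i, hi⟩).2

lemma sum_count_le_card {A : Type*} [DecidableEq A] (M : Multiset A) (T : Finset A) :
    ∑ r ∈ T, M.count r ≤ Multiset.card M := by
  calc ∑ r ∈ T, M.count r = ∑ r ∈ T ∩ M.toFinset, M.count r := by
        refine (Finset.sum_subset Finset.inter_subset_left ?_).symm
        intro x hx hnx
        rw [Multiset.count_eq_zero]
        intro hmem
        exact hnx (Finset.mem_inter.mpr ⟨hx, Multiset.mem_toFinset.mpr hmem⟩)
    _ ≤ ∑ r ∈ M.toFinset, M.count r :=
        Finset.sum_le_sum_of_subset Finset.inter_subset_right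
    _ = Multiset.card M := M.toFinset_sum_count_eq

lemma sq_dvd_aux {A : Type*} [CommRing A] (p : Polynomial A) (r : A)
    (h0 : p.eval r = 0) (h1 : (Polynomial.derivative p).eval r = 0) :
    (Polynomial.X - Polynomial.C r) ^ 2 ∣ p := by
  obtain ⟨q, hq⟩ := Polynomial.dvd_iff_isRoot.mpr h0
  have hq' : q.eval r = 0 := by
    have := congrArg (fun z => Polynomial.eval r (Polynomial.derivative z)) hq
    simp only [Polynomial.derivative_mul, Polynomial.eval_add, Polynomial.eval_mul,
      Polynomial.derivative_sub, Polynomial.derivative_X, Polynomial.derivative_C,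
      Polynomial.eval_sub, Polynomial.eval_X, Polynomial.eval_C, sub_self, sub_zero,
      Polynomial.eval_one, one_mul, zero_mul, mul_zero, add_zero] at this
    rw [h1] at this
    exact this.symm
  obtain ⟨q2, hq2⟩ := Polynomial.dvd_iff_isRoot.mpr hq'
  exact ⟨q2, by rw [hq, hq2]; ring⟩

lemma zeroFirst_coeff (s c : ℕ) (g : MvPolynomial (Fin s) ℂ) (ν : Fin s →₀ ℕ)
    (hν : ∀ i : Fin s, i.1 < c → ν i = 0) :
    MvPolynomial.coeff ν (zeroFirst s c g) = MvPolynomial.coeff ν g := by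
  classical
  have hg := g.support_sum_monomial_coeff
  conv_lhs => rw [← hg]
  rw [zeroFirst, map_sum, MvPolynomial.coeff_sum]
  have hterm : ∀ μ ∈ g.support,
      MvPolynomial.coeff ν (MvPolynomial.aeval (fun i : Fin s =>
          if (i : ℕ) < c then 0 else MvPolynomial.X i)
        (MvPolynomial.monomial μ (MvPolynomial.coeff μ g)))
      = if μ = ν then MvPolynomial.coeff ν g else 0 := by
    intro μ _
    by_cases h : ∀ i : Fin s, i.1 < c → μ i = 0
    · have heq : MvPolynomial.aeval (fun i : Fin s =>
            if (i : ℕ) < c then 0 else MvPolynomial.X i)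
          (MvPolynomial.monomial μ (MvPolynomial.coeff μ g))
          = MvPolynomial.monomial μ (MvPolynomial.coeff μ g) := by
        rw [MvPolynomial.aeval_monomial, MvPolynomial.monomial_eq]
        congr 1
        refine Finsupp.prod_congr ?_
        intro i hi
        have hic : ¬ (i : ℕ) < c := fun hic => (Finsupp.mem_support_iff.mp hi) (h i hic)
        simp [hic]
      rw [heq, MvPolynomial.coeff_monomial]
      by_cases hμν : μ = ν
      · subst hμν; simp
      · simp [hμν]
    · push_neg at h
      obtain ⟨i0, hi0c, hi0⟩ := h
      have heq : MvPolynomial.aeval (fun i : Fin s =>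
            if (i : ℕ) < c then 0 else MvPolynomial.X i)
          (MvPolynomial.monomial μ (MvPolynomial.coeff μ g))
          = (0 : MvPolynomial (Fin s) ℂ) := by
        rw [MvPolynomial.aeval_monomial]
        have hz : (μ.prod fun i k =>
            (if (i : ℕ) < c then (0 : MvPolynomial (Fin s) ℂ)
              else MvPolynomial.X i) ^ k) = 0 := by
          rw [Finsupp.prod]
          apply Finset.prod_eq_zero (Finsupp.mem_support_iff.mpr hi0)
          simp [hi0c, zero_pow hi0]
        rw [hz, mul_zero]
      rw [heq]
      have hμν : μ ≠ ν := by
        rintro rfl; exact hi0 (hν i0 hi0c)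
      simp [hμν]
  rw [Finset.sum_congr rfl hterm,
    Finset.sum_ite_eq' g.support ν (fun _ => MvPolynomial.coeff ν g)]
  by_cases hν2 : ν ∈ g.support
  · simp [hν2]
  · simp [hν2, MvPolynomial.notMem_support_iff.mp hν2]

lemma card_zero_lt (s c : ℕ) (g : MvPolynomial (Fin s) ℂ) (hsym : g.IsSymmetric)
    (hz : zeroFirst s c g = 0) (μ : Fin s →₀ ℕ) (hμ : MvPolynomial.coeff μ g ≠ 0) :
    (Finset.univ.filter (fun i : Fin s => μ i = 0)).card < c := by
  classical
  by_contra hcon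
  push_neg at hcon
  obtain ⟨T, hTsub, hTcard⟩ := Finset.exists_subset_card_eq hcon
  obtain ⟨σ, hσ⟩ := exists_perm_aux s c T hTcard
  set ν := Finsupp.mapDomain (⇑σ.symm) μ with hνdef
  have hco : MvPolynomial.coeff ν g = MvPolynomial.coeff μ g := by
    conv_lhs => rw [← hsym σ.symm]
    exact MvPolynomial.coeff_rename_mapDomain _ (Equiv.injective _) _ _
  have hν0 : ∀ i : Fin s, i.1 < c → ν i = 0 := by
    intro i hi
    have hνi : ν i = μ (σ i) := by
      rw [hνdef, ← Finsupp.equivMapDomain_eq_mapDomain]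
      simp
    rw [hνi]
    have := hTsub (hσ i hi)
    simpa using (Finset.mem_filter.mp this).2
  have hcf := zeroFirst_coeff s c g ν hν0
  rw [hz] at hcf
  simp only [MvPolynomial.coeff_zero] at hcf
  rw [hco] at hcf
  exact hμ hcf.symm

lemma derivative_aeval_sum (s : ℕ) (τ : Fin s → Polynomial (MvPolynomial (Fin s) ℂ))
    (f : MvPolynomial (Fin s) ℂ) :
    Polynomial.derivative (MvPolynomial.aeval τ f) =
      ∑ i : Fin s, MvPolynomial.aeval τ (MvPolynomial.pderiv i f) *
        Polynomial.derivative (τ i) := by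
  classical
  induction f using MvPolynomial.induction_on with
  | C c =>
      simp [MvPolynomial.algebraMap_eq]
  | add p q hp hq =>
      simp only [map_add, Polynomial.derivative_add, hp, hq, add_mul,
        Finset.sum_add_distrib]
  | mul_X p i hp =>
      rw [map_mul, MvPolynomial.aeval_X, Polynomial.derivative_mul, hp]
      have hrw : ∀ i' : Fin s,
          MvPolynomial.aeval τ (MvPolynomial.pderiv i' (p * MvPolynomial.X i)) *
            Polynomial.derivative (τ i')
          = MvPolynomial.aeval τ (MvPolynomial.pderiv i' p) *
              Polynomial.derivative (τ i') * τ i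
            + (if i' = i then MvPolynomial.aeval τ p * Polynomial.derivative (τ i) else 0) := by
        intro i'
        rw [MvPolynomial.pderiv_mul, MvPolynomial.pderiv_X]
        by_cases h : i' = i
        · subst h
          simp [Pi.single_apply]
          ring
        · simp [Pi.single_apply, h]
          ring
      rw [Finset.sum_congr rfl (fun i' _ => hrw i'), Finset.sum_add_distrib,
        Finset.sum_ite_eq' Finset.univ i
          (fun _ => MvPolynomial.aeval τ p * Polynomial.derivative (τ i))]
      simp only [Finset.mem_univ, if_pos, Finset.sum_mul]

lemma comp_aeval_ringHom (s : ℕ)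
    (Φ : Polynomial (MvPolynomial (Fin s) ℂ) →+* MvPolynomial (Fin s) ℂ)
    (hΦ : ∀ c : ℂ, Φ (Polynomial.C (MvPolynomial.C c)) = MvPolynomial.C c)
    (τ : Fin s → Polynomial (MvPolynomial (Fin s) ℂ)) (p : MvPolynomial (Fin s) ℂ) :
    Φ (MvPolynomial.aeval τ p) = MvPolynomial.aeval (fun t => Φ (τ t)) p := by
  rw [MvPolynomial.aeval_def, MvPolynomial.aeval_def, MvPolynomial.eval₂_comp_left Φ]
  congr 1
  apply RingHom.ext
  intro c
  simp only [RingHom.coe_comp, Function.comp_apply]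
  have h1 : algebraMap ℂ (Polynomial (MvPolynomial (Fin s) ℂ)) c
      = Polynomial.C (MvPolynomial.C c) := by
    rw [Polynomial.algebraMap_apply, MvPolynomial.algebraMap_eq]
  rw [h1, hΦ c, MvPolynomial.algebraMap_eq]
/- STATEMENT 14: if `s ≥ k + 1` then every `f ∈ 𝓕` vanishes when any
`a ≥ k + 1` of its variables are set equal. -/
theorem statement14 (k l s : ℕ) (hk : 1 ≤ k) (hl : l ≤ k)
    (m : Fin k → ℕ) (hs : wt k m = 2 * s + l) (hsk : k + 1 ≤ s) :
    ∀ f ∈ FSpace k l s m, ∀ a : ℕ, k + 1 ≤ a → a ≤ s → spec s a f = 0 := by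
  classical
  rintro f ⟨hsym, hdeg, hz1, hc3⟩
  -- Step 1 : the product of all variables divides f
  have hP : (∏ i : Fin s, MvPolynomial.X i : MvPolynomial (Fin s) ℂ) ∣ f := by
    have hpos : ∀ μ ∈ f.support, ∀ i : Fin s, μ i ≠ 0 := by
      intro μ hμ i h0
      have h1 := card_zero_lt s 1 f hsym hz1 μ (MvPolynomial.mem_support_iff.mp hμ)
      have h2 : i ∈ Finset.univ.filter (fun i : Fin s => μ i = 0) := by simp [h0]
      have h3 := Finset.card_pos.mpr ⟨i, h2⟩
      omega
    conv_rhs => rw [← f.support_sum_monomial_coeff]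
    apply Finset.dvd_sum
    intro μ hμ
    rw [MvPolynomial.monomial_eq]
    apply Dvd.dvd.mul_left
    rw [Finsupp.prod]
    have hsupp : μ.support = Finset.univ :=
      Finset.eq_univ_iff_forall.mpr (fun i => Finsupp.mem_support_iff.mpr (hpos μ hμ i))
    rw [hsupp]
    exact Finset.prod_dvd_prod_of_dvd _ _ (fun i _ => dvd_pow_self _ (hpos μ hμ i))
  obtain ⟨g, hg⟩ := hP
  have hPne : (∏ i : Fin s, MvPolynomial.X i : MvPolynomial (Fin s) ℂ) ≠ 0 :=
    Finset.prod_ne_zero_iff.mpr (fun i _ => MvPolynomial.X_ne_zero i)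
  have hgsym : g.IsSymmetric := by
    intro e
    have h1 : MvPolynomial.rename (⇑e) f = f := hsym e
    rw [hg, map_mul] at h1
    have h2 : MvPolynomial.rename (⇑e) (∏ i : Fin s, MvPolynomial.X i)
        = (∏ i : Fin s, MvPolynomial.X i : MvPolynomial (Fin s) ℂ) := by
      rw [map_prod]
      simp only [MvPolynomial.rename_X]
      exact Equiv.prod_comp e (fun i => (MvPolynomial.X i : MvPolynomial (Fin s) ℂ))
    rw [h2] at h1
    exact mul_left_cancel₀ hPne h1
  have hzg : zeroFirst s (k - l + 1) g = 0 := hc3 (by omega) g hg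
  have hcard : ∀ μ : Fin s →₀ ℕ, MvPolynomial.coeff μ g ≠ 0 →
      (Finset.univ.filter (fun i : Fin s => μ i = 0)).card < k - l + 1 :=
    fun μ hμ => card_zero_lt s (k - l + 1) g hgsym hzg μ hμ
  -- Step 2 : the degree bound
  have hMa : ∀ a : ℕ, k ≤ a → Ma k m a = 2 * s + l := by
    intro a ha
    rw [← hs, Ma, wt]
    apply Finset.sum_congr rfl
    intro i _
    have hik := i.2
    congr 1
    exact min_eq_right (by omega)
  have hdegF : ∀ a : ℕ, k + 1 ≤ a → a ≤ s → (spec s a f).natDegree ≤ 2 * s + l - a := by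
    intro a ha1 ha2
    rw [Polynomial.natDegree_le_iff_coeff_eq_zero]
    intro N hN
    apply hdeg a (by omega) ha2 N
    rw [hMa a (by omega)]
    push_cast
    omega
  -- Step 3 : vanishing to high order at 0
  have hlow : ∀ a : ℕ, k + 1 ≤ a → a ≤ s →
      Polynomial.X ^ (a + (a - (k - l))) ∣ spec s a f := by
    intro a ha1 ha2
    rw [hg]
    unfold spec
    rw [map_mul, pow_add]
    apply mul_dvd_mul
    · have h1 : (Polynomial.X : Polynomial (MvPolynomial (Fin s) ℂ)) ^ a
          = ∏ i ∈ Finset.univ.filter (fun i : Fin s => i.1 < a),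
              (if (i : ℕ) < a then (Polynomial.X : Polynomial (MvPolynomial (Fin s) ℂ))
                else Polynomial.C (MvPolynomial.X i)) := by
        have h2 : ∀ i ∈ Finset.univ.filter (fun i : Fin s => i.1 < a),
            (if (i : ℕ) < a then (Polynomial.X : Polynomial (MvPolynomial (Fin s) ℂ))
              else Polynomial.C (MvPolynomial.X i)) = Polynomial.X := by
          intro i hi
          simp only [Finset.mem_filter] at hi
          simp [hi.2]
        rw [Finset.prod_congr rfl h2, Finset.prod_const, card_lt_aux s a ha2]
      rw [map_prod]
      simp only [MvPolynomial.aeval_X]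
      rw [h1]
      exact Finset.prod_dvd_prod_of_subset _ _ _ (Finset.filter_subset _ _)
    · conv_rhs => rw [← g.support_sum_monomial_coeff, map_sum]
      apply Finset.dvd_sum
      intro μ hμ
      rw [MvPolynomial.aeval_monomial]
      apply Dvd.dvd.mul_left
      rw [Finsupp.prod,
        ← Finset.prod_filter_mul_prod_filter_not μ.support (fun i : Fin s => i.1 < a)]
      apply Dvd.dvd.mul_right
      have h2 : ∏ i ∈ μ.support.filter (fun i : Fin s => i.1 < a),
          (if (i : ℕ) < a then (Polynomial.X : Polynomial (MvPolynomial (Fin s) ℂ))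
            else Polynomial.C (MvPolynomial.X i)) ^ μ i
          = Polynomial.X ^ (∑ i ∈ μ.support.filter (fun i : Fin s => i.1 < a), μ i) := by
        rw [← Finset.prod_pow_eq_pow_sum]
        apply Finset.prod_congr rfl
        intro i hi
        simp only [Finset.mem_filter] at hi
        simp [hi.2]
      rw [h2]
      apply pow_dvd_pow
      have hzc := hcard μ (MvPolynomial.mem_support_iff.mp hμ)
      have hsub : μ.support.filter (fun i : Fin s => i.1 < a) ⊆
          Finset.univ.filter (fun i : Fin s => i.1 < a) := by
        intro x hx
        simp only [Finset.mem_filter] at hx ⊢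
        exact ⟨Finset.mem_univ x, hx.2⟩
      have hsum : ∑ i ∈ μ.support.filter (fun i : Fin s => i.1 < a), μ i
          = ∑ i ∈ Finset.univ.filter (fun i : Fin s => i.1 < a), μ i := by
        apply Finset.sum_subset hsub
        intro x hxA hxn
        by_contra h0
        apply hxn
        simp only [Finset.mem_filter, Finsupp.mem_support_iff]
        exact ⟨h0, (Finset.mem_filter.mp hxA).2⟩
      rw [hsum]
      have hone : ((Finset.univ.filter (fun i : Fin s => i.1 < a)).filter
          (fun i => ¬ μ i = 0)).card
          ≤ ∑ i ∈ Finset.univ.filter (fun i : Fin s => i.1 < a), μ i := by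
        calc ((Finset.univ.filter (fun i : Fin s => i.1 < a)).filter
              (fun i => ¬ μ i = 0)).card
            = ∑ _i ∈ (Finset.univ.filter (fun i : Fin s => i.1 < a)).filter
                (fun i => ¬ μ i = 0), 1 := by simp
          _ ≤ ∑ i ∈ (Finset.univ.filter (fun i : Fin s => i.1 < a)).filter
                (fun i => ¬ μ i = 0), μ i := Finset.sum_le_sum (fun i hi => by
                  have := (Finset.mem_filter.mp hi).2; omega)
          _ ≤ ∑ i ∈ Finset.univ.filter (fun i : Fin s => i.1 < a), μ i :=
              Finset.sum_le_sum_of_subset (Finset.filter_subset _ _)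
      have hz2 : ((Finset.univ.filter (fun i : Fin s => i.1 < a)).filter
          (fun i => μ i = 0)).card
          ≤ (Finset.univ.filter (fun i : Fin s => μ i = 0)).card := by
        apply Finset.card_le_card
        intro x hx
        simp only [Finset.mem_filter] at hx ⊢
        exact ⟨Finset.mem_univ x, hx.2⟩
      have hfib := Finset.card_filter_add_card_filter_not
        (s := Finset.univ.filter (fun i : Fin s => i.1 < a)) (p := fun i => μ i = 0)
      have hcA := card_lt_aux s a ha2
      omega
  -- Step 4 : the inductive step
  have step : ∀ a : ℕ, k + 1 ≤ a → a ≤ s → (a < s → spec s (a + 1) f = 0) →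
      spec s a f = 0 := by
    intro a ha1 ha2 hnext
    by_contra hF
    set τ : Fin s → Polynomial (MvPolynomial (Fin s) ℂ) :=
      fun i => if (i : ℕ) < a then Polynomial.X else Polynomial.C (MvPolynomial.X i) with hτ
    have hFdef : spec s a f = MvPolynomial.aeval τ f := rfl
    have hroot2 : ∀ j : Fin s, a ≤ j.1 →
        (Polynomial.X - Polynomial.C (MvPolynomial.X j)) ^ 2 ∣ spec s a f := by
      intro j hj
      have haslt : a < s := lt_of_le_of_lt hj j.2
      have hnx := hnext haslt
      set τ' : Fin s → Polynomial (MvPolynomial (Fin s) ℂ) :=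
        fun i => if (i : ℕ) < a + 1 then Polynomial.X
          else Polynomial.C (MvPolynomial.X i) with hτ'
      have hnx' : MvPolynomial.aeval τ' f = 0 := hnx
      set aF : Fin s := ⟨a, haslt⟩ with haF
      have haFval : (aF : ℕ) = a := rfl
      set σ : Equiv.Perm (Fin s) := Equiv.swap aF j with hσdef
      set χ : Fin s → MvPolynomial (Fin s) ℂ :=
        fun t => if t.1 < a then MvPolynomial.X j else MvPolynomial.X t with hχ
      set χ' : Fin s → MvPolynomial (Fin s) ℂ :=
        fun t => if t.1 < a + 1 then MvPolynomial.X j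
          else (if t = j then MvPolynomial.X aF else MvPolynomial.X t) with hχ'
      have hjcase : j = aF ∨ a + 1 ≤ j.1 := by
        rcases Nat.eq_or_lt_of_le hj with h | h
        · exact Or.inl (Fin.ext h.symm)
        · exact Or.inr h
      have hχlt : ∀ t : Fin s, t.1 < a → χ t = MvPolynomial.X j := by
        intro t ht; simp [hχ, ht]
      have hχge : ∀ t : Fin s, ¬ t.1 < a → χ t = MvPolynomial.X t := by
        intro t ht; simp [hχ, ht]
      have hχ'lt : ∀ t : Fin s, t.1 < a + 1 → χ' t = MvPolynomial.X j := by
        intro t ht; simp [hχ', Nat.lt_succ_iff.mp ht]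
      have hχ'j : a + 1 ≤ j.1 → χ' j = MvPolynomial.X aF := by
        intro hj2; simp [hχ', show ¬ (j : ℕ) ≤ a by omega]
      have hχ'ge : ∀ t : Fin s, ¬ t.1 < a + 1 → t ≠ j → χ' t = MvPolynomial.X t := by
        intro t ht htj; simp [hχ', htj, show ¬ (t : ℕ) ≤ a by omega]
      have hχσ : ∀ t : Fin s, χ (σ t) = χ' t := by
        intro t
        have hswap : σ t = if t = aF then j else if t = j then aF else t := by
          rw [hσdef, Equiv.swap_apply_def]
        by_cases h1 : t = aF
        · rw [hswap, if_pos h1, hχge j (Nat.not_lt.mpr hj), h1,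
            hχ'lt aF (by omega)]
        · by_cases h2 : t = j
          · have hj2 : a + 1 ≤ j.1 := by
              rcases hjcase with h | h
              · exact absurd (h2.trans h) h1
              · exact h
            rw [hswap, if_neg h1, if_pos h2, hχge aF (by omega), h2, hχ'j hj2]
          · rw [hswap, if_neg h1, if_neg h2]
            by_cases h3 : t.1 < a
            · rw [hχlt t h3, hχ'lt t (by omega)]
            · have h4 : ¬ t.1 < a + 1 := by
                have : t.1 ≠ a := fun hh => h1 (Fin.ext hh)
                omega
              rw [hχge t h3, hχ'ge t h4 h2]
      have hχσf : (χ ∘ ⇑σ) = χ' := funext hχσ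
      -- the evaluation homomorphism Ψ
      set ρ : MvPolynomial (Fin s) ℂ →ₐ[ℂ] MvPolynomial (Fin s) ℂ :=
        MvPolynomial.aeval (fun t : Fin s =>
          if t = j then MvPolynomial.X aF else MvPolynomial.X t) with hρ
      set Ψ : Polynomial (MvPolynomial (Fin s) ℂ) →+* MvPolynomial (Fin s) ℂ :=
        Polynomial.eval₂RingHom (ρ.toRingHom) (MvPolynomial.X j) with hΨ
      have hΨC : ∀ c : ℂ, Ψ (Polynomial.C (MvPolynomial.C c)) = MvPolynomial.C c := by
        intro c
        rw [hΨ]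
        simp only [Polynomial.coe_eval₂RingHom, Polynomial.eval₂_C]
        rw [hρ]
        simp [MvPolynomial.algebraMap_eq]
      have hΨτ' : (fun t : Fin s => Ψ (τ' t)) = χ' := by
        funext t
        by_cases h : (t : ℕ) < a + 1
        · rw [hτ']
          simp only [h, if_pos]
          rw [hΨ]
          simp only [Polynomial.coe_eval₂RingHom, Polynomial.eval₂_X]
          rw [hχ'lt t h]
        · rw [hτ']
          simp only [h, if_neg, if_false]
          rw [hΨ]
          simp only [Polynomial.coe_eval₂RingHom, Polynomial.eval₂_C]
          rw [hρ, hχ']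
          simp [h]
      have hχ'f : MvPolynomial.aeval χ' f = 0 := by
        have hc := comp_aeval_ringHom s Ψ hΨC τ' f
        rw [hnx', map_zero] at hc
        rw [hΨτ'] at hc
        exact hc.symm
      have hχf : MvPolynomial.aeval χ f = 0 := by
        have h1 : MvPolynomial.aeval χ f = MvPolynomial.aeval (χ ∘ ⇑σ) f := by
          conv_lhs => rw [← hsym σ]
          rw [MvPolynomial.aeval_rename]
        rw [h1, hχσf, hχ'f]
      have hfunχ : (fun t : Fin s => Polynomial.evalRingHom (MvPolynomial.X j) (τ t)) = χ := by
        funext t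
        by_cases h : (t : ℕ) < a
        · rw [hτ]
          simp only [h, if_pos]
          simp only [Polynomial.coe_evalRingHom, Polynomial.eval_X]
          rw [hχlt t h]
        · rw [hτ]
          simp only [h, if_neg, if_false]
          simp only [Polynomial.coe_evalRingHom, Polynomial.eval_C]
          rw [hχge t h]
      have hevalF : Polynomial.eval (MvPolynomial.X j) (spec s a f) = 0 := by
        have hc := comp_aeval_ringHom s (Polynomial.evalRingHom (MvPolynomial.X j))
          (by intro c; simp) τ f
        rw [hfunχ] at hc
        rw [hFdef]
        have : Polynomial.evalRingHom (MvPolynomial.X j) (MvPolynomial.aeval τ f)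
            = Polynomial.eval (MvPolynomial.X j) (MvPolynomial.aeval τ f) := rfl
        rw [← this, hc, hχf]
      -- the derivative also vanishes at X j
      have hterm : ∀ i : Fin s, MvPolynomial.aeval χ' (MvPolynomial.pderiv i f)
          = MvPolynomial.aeval χ (MvPolynomial.pderiv (σ i) f) := by
        intro i
        have h1 := MvPolynomial.pderiv_rename σ.injective i f
        rw [hsym σ] at h1
        rw [h1, MvPolynomial.aeval_rename, hχσf]
      have hpd : ∀ i : Fin s, i.1 < a ∨ i = j →
          MvPolynomial.aeval χ (MvPolynomial.pderiv i f)
            = MvPolynomial.aeval χ (MvPolynomial.pderiv j f) := by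
        intro i hi
        rcases eq_or_ne i j with rfl | hij
        · rfl
        · have hia : i.1 < a := by
            rcases hi with h | h
            · exact h
            · exact absurd h hij
          set σ2 : Equiv.Perm (Fin s) := Equiv.swap i j with hσ2
          have hχσ2 : χ ∘ ⇑σ2 = χ := by
            funext t
            have hswap : σ2 t = if t = i then j else if t = j then i else t := by
              rw [hσ2, Equiv.swap_apply_def]
            simp only [Function.comp_apply, hswap]
            split_ifs with hh1 hh2
            · rw [hχge j (Nat.not_lt.mpr hj), hh1, hχlt i hia]
            · rw [hχlt i hia, hh2, hχge j (Nat.not_lt.mpr hj)]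
            · rfl
          have h1 := MvPolynomial.pderiv_rename σ2.injective j f
          rw [hsym σ2] at h1
          have hσ2j : σ2 j = i := by
            rw [hσ2]; exact Equiv.swap_apply_right i j
          rw [hσ2j] at h1
          rw [h1, MvPolynomial.aeval_rename, hχσ2]
      have hσaF : σ aF = j := by
        rw [hσdef]; exact Equiv.swap_apply_left aF j
      have hσfix : ∀ i : Fin s, i.1 < a → σ i = i := by
        intro i hi
        rw [hσdef]
        apply Equiv.swap_apply_of_ne_of_ne
        · intro h
          have := congrArg Fin.val h
          omega
        · intro h
          have := congrArg Fin.val h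
          omega
      have hins : Finset.univ.filter (fun i : Fin s => i.1 < a + 1)
          = insert aF (Finset.univ.filter (fun i : Fin s => i.1 < a)) := by
        ext x
        simp only [Finset.mem_filter, Finset.mem_univ, true_and, Finset.mem_insert]
        constructor
        · intro hx
          rcases eq_or_ne x aF with rfl | hxa
          · exact Or.inl rfl
          · right
            have : x.1 ≠ a := fun h => hxa (Fin.ext h)
            omega
        · rintro (rfl | hx)
          · omega
          · omega
      have haFnot : aF ∉ Finset.univ.filter (fun i : Fin s => i.1 < a) := by
        simp only [Finset.mem_filter, Finset.mem_univ, true_and]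
        omega
      have ht0 : MvPolynomial.aeval χ (MvPolynomial.pderiv j f) = 0 := by
        have hD := derivative_aeval_sum s τ' f
        have hsum0 : (0 : MvPolynomial (Fin s) ℂ) =
            ∑ i : Fin s, MvPolynomial.aeval χ' (MvPolynomial.pderiv i f) *
              (if (i : ℕ) < a + 1 then 1 else 0) := by
          calc (0 : MvPolynomial (Fin s) ℂ)
              = Ψ (Polynomial.derivative (MvPolynomial.aeval τ' f)) := by
                rw [hnx']; simp
            _ = ∑ i : Fin s, MvPolynomial.aeval χ' (MvPolynomial.pderiv i f) *
                (if (i : ℕ) < a + 1 then 1 else 0) := by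
                rw [hD, map_sum]
                apply Finset.sum_congr rfl
                intro i _
                rw [map_mul, comp_aeval_ringHom s Ψ hΨC τ' (MvPolynomial.pderiv i f), hΨτ']
                congr 1
                simp only [hτ']
                by_cases h : (i : ℕ) < a + 1
                · simp [h]
                · simp [h]
        have hchain : (0 : MvPolynomial (Fin s) ℂ)
            = MvPolynomial.aeval χ (MvPolynomial.pderiv j f)
              + a • MvPolynomial.aeval χ (MvPolynomial.pderiv j f) := by
          calc (0 : MvPolynomial (Fin s) ℂ)
              = ∑ i : Fin s, MvPolynomial.aeval χ' (MvPolynomial.pderiv i f) *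
                  (if (i : ℕ) < a + 1 then 1 else 0) := hsum0
            _ = ∑ i ∈ Finset.univ.filter (fun i : Fin s => i.1 < a + 1),
                  MvPolynomial.aeval χ' (MvPolynomial.pderiv i f) := by
                rw [Finset.sum_filter]
                apply Finset.sum_congr rfl
                intro i _
                by_cases h : (i : ℕ) < a + 1 <;> simp [h]
            _ = ∑ i ∈ Finset.univ.filter (fun i : Fin s => i.1 < a + 1),
                  MvPolynomial.aeval χ (MvPolynomial.pderiv (σ i) f) :=
                Finset.sum_congr rfl (fun i _ => hterm i)
            _ = MvPolynomial.aeval χ (MvPolynomial.pderiv (σ aF) f)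
                + ∑ i ∈ Finset.univ.filter (fun i : Fin s => i.1 < a),
                    MvPolynomial.aeval χ (MvPolynomial.pderiv (σ i) f) := by
                rw [hins, Finset.sum_insert haFnot]
            _ = MvPolynomial.aeval χ (MvPolynomial.pderiv j f)
                + a • MvPolynomial.aeval χ (MvPolynomial.pderiv j f) := by
                rw [hσaF]
                congr 1
                calc ∑ i ∈ Finset.univ.filter (fun i : Fin s => i.1 < a),
                      MvPolynomial.aeval χ (MvPolynomial.pderiv (σ i) f)
                    = ∑ _i ∈ Finset.univ.filter (fun i : Fin s => i.1 < a),
                        MvPolynomial.aeval χ (MvPolynomial.pderiv j f) := by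
                      apply Finset.sum_congr rfl
                      intro i hi
                      have hia : i.1 < a := (Finset.mem_filter.mp hi).2
                      rw [hσfix i hia]
                      exact hpd i (Or.inl hia)
                  _ = a • MvPolynomial.aeval χ (MvPolynomial.pderiv j f) := by
                      rw [Finset.sum_const, card_lt_aux s a ha2]
        have hmul : ((a : MvPolynomial (Fin s) ℂ) + 1)
            * MvPolynomial.aeval χ (MvPolynomial.pderiv j f) = 0 := by
          rw [nsmul_eq_mul] at hchain
          linear_combination -hchain
        have hcne : ((a : MvPolynomial (Fin s) ℂ) + 1) ≠ 0 := by
          have hcast : ((a : MvPolynomial (Fin s) ℂ) + 1)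
              = ((a + 1 : ℕ) : MvPolynomial (Fin s) ℂ) := by push_cast; ring
          rw [hcast]
          exact Nat.cast_ne_zero.mpr (by omega)
        rcases mul_eq_zero.mp hmul with h | h
        · exact absurd h hcne
        · exact h
      have hderivF : Polynomial.eval (MvPolynomial.X j)
          (Polynomial.derivative (spec s a f)) = 0 := by
        rw [hFdef, derivative_aeval_sum s τ f, Polynomial.eval_finset_sum]
        apply Finset.sum_eq_zero
        intro i _
        rw [Polynomial.eval_mul]
        by_cases h : (i : ℕ) < a
        · have h1 : Polynomial.eval (MvPolynomial.X j)
              (MvPolynomial.aeval τ (MvPolynomial.pderiv i f))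
              = MvPolynomial.aeval χ (MvPolynomial.pderiv i f) := by
            have hc := comp_aeval_ringHom s (Polynomial.evalRingHom (MvPolynomial.X j))
              (by intro c; simp) τ (MvPolynomial.pderiv i f)
            rw [hfunχ] at hc
            exact hc
          rw [h1, hpd i (Or.inl h), ht0, zero_mul]
        · have h2 : τ i = Polynomial.C (MvPolynomial.X i) := by
            rw [hτ]; simp [h]
          rw [h2]
          simp
      exact sq_dvd_aux (spec s a f) (MvPolynomial.X j) hevalF hderivF
    -- counting roots
    have hned := hdegF a ha1 ha2
    have hXdvd := hlow a ha1 ha2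
    have hm0 : a + (a - (k - l)) ≤ (spec s a f).rootMultiplicity 0 := by
      rw [Polynomial.le_rootMultiplicity_iff hF]
      simpa using hXdvd
    have hmj : ∀ j : Fin s, a ≤ j.1 →
        2 ≤ (spec s a f).rootMultiplicity (MvPolynomial.X j) := by
      intro j hj
      rw [Polynomial.le_rootMultiplicity_iff hF]
      exact hroot2 j hj
    set J := Finset.univ.filter (fun j : Fin s => a ≤ j.1) with hJ
    have hJcard : J.card = s - a := by
      have h1 := Finset.card_filter_add_card_filter_not
        (s := (Finset.univ : Finset (Fin s))) (p := fun i : Fin s => i.1 < a)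
      have h2 : (Finset.univ.filter (fun i : Fin s => ¬ i.1 < a)) = J := by
        ext x
        simp [hJ, Nat.not_lt]
      rw [h2] at h1
      have h3 := card_lt_aux s a ha2
      have h4 : (Finset.univ : Finset (Fin s)).card = s := by
        rw [Finset.card_univ, Fintype.card_fin]
      omega
    set T : Finset (MvPolynomial (Fin s) ℂ) :=
      insert 0 (J.image (fun j => MvPolynomial.X j)) with hT
    set Rt := (spec s a f).roots with hRt
    have hsumT : ∑ r ∈ T, Rt.count r ≤ Multiset.card Rt := sum_count_le_card Rt T
    have h0notin : (0 : MvPolynomial (Fin s) ℂ) ∉ J.image (fun j => MvPolynomial.X j) := by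
      simp only [Finset.mem_image, not_exists]
      rintro x ⟨hx, h0⟩
      exact MvPolynomial.X_ne_zero x h0
    have hsum_split : ∑ r ∈ T, Rt.count r
        = Rt.count 0 + ∑ j ∈ J, Rt.count (MvPolynomial.X j) := by
      rw [hT, Finset.sum_insert h0notin,
        Finset.sum_image (fun x _ y _ h => MvPolynomial.X_injective h)]
    have hlower : a + (a - (k - l)) + 2 * (s - a) ≤ Multiset.card Rt := by
      have hc1 : a + (a - (k - l)) ≤ Rt.count 0 := by
        rw [hRt, Polynomial.count_roots]
        exact hm0
      have hc2 : 2 * (s - a) ≤ ∑ j ∈ J, Rt.count (MvPolynomial.X j) := by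
        calc 2 * (s - a) = ∑ _j ∈ J, 2 := by
              rw [Finset.sum_const, hJcard, smul_eq_mul, mul_comm]
          _ ≤ ∑ j ∈ J, Rt.count (MvPolynomial.X j) := by
              apply Finset.sum_le_sum
              intro j hj
              rw [hRt, Polynomial.count_roots]
              exact hmj j (by simpa [hJ] using (Finset.mem_filter.mp hj).2)
      calc a + (a - (k - l)) + 2 * (s - a)
          ≤ Rt.count 0 + ∑ j ∈ J, Rt.count (MvPolynomial.X j) := add_le_add hc1 hc2
        _ = ∑ r ∈ T, Rt.count r := hsum_split.symm
        _ ≤ Multiset.card Rt := hsumT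
    have hupper : Multiset.card Rt ≤ (spec s a f).natDegree := by
      rw [hRt]
      exact (spec s a f).card_roots'
    omega
  -- Step 5 : downward induction
  intro a ha1 ha2
  have key : ∀ b : ℕ, ∀ a : ℕ, k + 1 ≤ a → a ≤ s → s - a ≤ b → spec s a f = 0 := by
    intro b
    induction b with
    | zero =>
        intro a h1 h2 h3
        exact step a h1 h2 (fun hlt => absurd h3 (by omega))
    | succ n ih =>
        intro a h1 h2 h3
        exact step a h1 h2 (fun hlt => ih (a + 1) (by omega) (by omega) (by omega))
  exact key (s - a) a ha1 ha2 le_rfl
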